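/- Let m₁, m₂ be distinct nonzero integers, let r be a positive integer, and let b be an integer coprime to r. Let q₁, q₂ be squarefree positive integers and let q₃ be any positive integer. Then |Σ e(m₁a₁/q₁ + m₂a₂/q₂)| ≤ |m₁ · m₂ · (m₁ - m₂)| · τ(r·lcm(q₁,q₂))³, where the sum is over pairs (a₁, a₂) with a₁ ∈ {1,...,q₁} coprime to q₁, a₂ ∈ {1,...,q₂} coprime to q₂, and denom(a₁/q₁ + a₂/q₂ - b/r) = q₃. -/

import Mathlib

/-- `e(θ) = exp(2πiθ)`. -/
noncomputable def e (θ : ℝ) : ℂ := Complex.exp (2 * Real.pi * Complex.I * θ)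

lemma e_add (x y : ℝ) : e (x + y) = e x * e y := by
  rw [e, e, e, ← Complex.exp_add]
  congr 1
  push_cast
  ring

lemma e_int (n : ℤ) : e n = 1 := by
  simpa [e, mul_comm] using Complex.exp_int_mul_two_pi_mul_I n

lemma e_pow (θ : ℝ) (k : ℕ) : e θ ^ k = e (k * θ) := by
  rw [e, e, ← Complex.exp_nat_mul]
  congr 1
  push_cast
  ring

lemma abs_e (θ : ℝ) : ‖e θ‖ = 1 := by
  rw [e, Complex.norm_exp]
  have : (2 * Real.pi * Complex.I * θ).re = 0 := by simp [Complex.mul_re, Complex.I_re]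
  rw [this, Real.exp_zero]

lemma e_rat_eq_one_iff (x : ℚ) : e (x : ℝ) = 1 ↔ x.den = 1 := by
  constructor
  · intro h
    rw [e, Complex.exp_eq_one_iff] at h
    obtain ⟨n, hn⟩ := h
    have h2 : ((2 : ℂ) * Real.pi * Complex.I) ≠ 0 := by
      simp [Real.pi_ne_zero, Complex.I_ne_zero, Complex.ofReal_ne_zero]
    have hx : ((x : ℝ) : ℂ) = (n : ℂ) := by
      have := hn
      rw [mul_comm (n : ℂ) _] at this
      exact mul_left_cancel₀ h2 this
    have hxq : (x : ℚ) = (n : ℚ) := by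
      have h3 : ((x : ℝ) : ℂ) = ((n : ℝ) : ℂ) := by push_cast at hx ⊢; exact hx
      have h4 := Complex.ofReal_injective h3
      exact_mod_cast h4
    rw [hxq]; exact Rat.den_intCast n
  · intro h
    have hx : (x : ℚ) = (x.num : ℚ) := by
      rw [← Rat.num_div_den x, h]; simp
    rw [hx]
    push_cast
    exact e_int x.num

lemma geom_detect (Q : ℕ) (z : ℂ) (h : z ^ Q = 1) :
    ∑ k ∈ Finset.range Q, z ^ k = if z = 1 then (Q : ℂ) else 0 := by
  split_ifs with h1
  · subst h1; simp
  · rw [geom_sum_eq h1, h]; simp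

lemma den_mul_nat_eq_one_iff (x : ℚ) (t : ℕ) : ((t : ℚ) * x).den = 1 ↔ x.den ∣ t := by
  constructor
  · intro h
    have h1 : ((((t : ℚ) * x).num : ℤ) : ℚ) = (t : ℚ) * x := (Rat.den_eq_one_iff _).mp h
    set n := ((t : ℚ) * x).num with hn
    have h2 : (t : ℚ) * x.num = n * x.den := by
      linear_combination (-(t:ℚ)) * (Rat.mul_den_eq_num x) - (x.den:ℚ) * h1
    have h3 : ((t : ℤ) * x.num) = n * x.den := by exact_mod_cast h2
    have h4 : (x.den : ℤ) ∣ (t : ℤ) * x.num := ⟨n, by linarith [h3]⟩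
    have h5 : x.den ∣ t * x.num.natAbs := by
      have := Int.natAbs_dvd_natAbs.mpr h4
      simpa [Int.natAbs_mul] using this
    exact (Nat.Coprime.dvd_of_dvd_mul_right (Nat.Coprime.symm x.reduced) h5)
  · intro ⟨s, hs⟩
    have : (t : ℚ) * x = ((s : ℤ) * x.num : ℤ) := by
      push_cast
      rw [hs]
      push_cast
      rw [mul_comm (x.den : ℚ) (s : ℚ), mul_assoc]
      congr 1
      exact_mod_cast Rat.den_mul_eq_num x
    rw [this, Rat.den_intCast]

lemma detect (Q : ℕ) (x : ℚ) (hx : x.den ∣ Q) (t : ℕ) :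
    ∑ k ∈ Finset.range Q, e (k * (t * (x : ℝ))) = if x.den ∣ t then (Q : ℂ) else 0 := by
  have key : ∀ s : ℕ, x.den ∣ s → ∃ n : ℤ, (s : ℝ) * (x : ℝ) = (n : ℝ) := by
    intro s hs
    have h1 : ((s : ℚ) * x).den = 1 := (den_mul_nat_eq_one_iff x s).mpr hs
    refine ⟨((s : ℚ) * x).num, ?_⟩
    have h2 := (Rat.den_eq_one_iff _).mp h1
    have : (((((s : ℚ) * x).num : ℤ) : ℚ) : ℝ) = (((s : ℚ) * x : ℚ) : ℝ) := by
      exact_mod_cast congrArg (fun y : ℚ => (y : ℝ)) h2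
    push_cast at this ⊢
    linarith [this]
  have hz : (e (t * (x : ℝ))) ^ Q = 1 := by
    rw [e_pow]
    obtain ⟨n, hn⟩ := key Q hx
    have : (Q : ℝ) * ((t : ℝ) * (x : ℝ)) = ((t * n : ℤ) : ℝ) := by
      push_cast
      linear_combination (t : ℝ) * hn
    rw [this, e_int]
  have hterm : ∀ k : ℕ, e (k * (t * (x:ℝ))) = (e (t * (x:ℝ)))^k := fun k => (e_pow _ k).symm
  rw [Finset.sum_congr rfl (fun k _ => hterm k), geom_detect Q _ hz]
  have hiff : e (t * (x : ℝ)) = 1 ↔ x.den ∣ t := by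
    have : (t : ℝ) * (x : ℝ) = (((t : ℚ) * x : ℚ) : ℝ) := by push_cast; ring
    rw [this, e_rat_eq_one_iff, den_mul_nat_eq_one_iff]
  split_ifs with h1 h2 h2
  · rfl
  · exact absurd (hiff.mp h1) h2
  · exact absurd (hiff.mpr h2) h1
  · rfl

lemma moebius_sum (n : ℕ) :
    ∑ d ∈ n.divisors, ArithmeticFunction.moebius d = if n = 1 then 1 else 0 := by
  rw [← ArithmeticFunction.coe_mul_zeta_apply, ArithmeticFunction.moebius_mul_coe_zeta,
    ArithmeticFunction.one_apply]

lemma moebius_detect (q₃ : ℕ) (hq₃ : 0 < q₃) (D : ℕ) :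
    ∑ t ∈ q₃.divisors, (ArithmeticFunction.moebius (q₃ / t) : ℤ) * (if D ∣ t then 1 else 0)
      = if D = q₃ then 1 else 0 := by
  by_cases hD : D ∣ q₃
  · rw [← Nat.sum_div_divisors q₃
      (fun t => (ArithmeticFunction.moebius (q₃ / t) : ℤ) * (if D ∣ t then 1 else 0))]
    have step : ∀ u ∈ q₃.divisors,
        (ArithmeticFunction.moebius (q₃ / (q₃ / u)) : ℤ) * (if D ∣ q₃ / u then 1 else 0)
        = (ArithmeticFunction.moebius u : ℤ) * (if u ∣ q₃ / D then 1 else 0) := by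
      intro u hu
      obtain ⟨hu1, hu2⟩ := Nat.mem_divisors.mp hu
      rw [Nat.div_div_self hu1 hu2]
      congr 1
      congr 1
      rw [eq_iff_iff]
      constructor
      · intro h
        -- D ∣ q₃ / u → u ∣ q₃ / D
        obtain ⟨c, hc⟩ := h
        obtain ⟨v, hv⟩ := hu1
        have hu0 : u ≠ 0 := by rintro rfl; simp at hv; omega
        have hq3u : q₃ / u = v := by rw [hv, Nat.mul_div_cancel_left _ (Nat.pos_of_ne_zero hu0)]
        rw [hq3u] at hc
        have : q₃ = D * (c * u) := by rw [hv, hc]; ring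
        exact ⟨c, by
          have hD0 : D ≠ 0 := by rintro rfl; simp at this; omega
          rw [this, Nat.mul_div_cancel_left _ (Nat.pos_of_ne_zero hD0), mul_comm]⟩
      · intro h
        obtain ⟨c, hc⟩ := h
        obtain ⟨w, hw⟩ := hD
        have hD0 : D ≠ 0 := by rintro rfl; simp at hw; omega
        have hqD : q₃ / D = w := by rw [hw, Nat.mul_div_cancel_left _ (Nat.pos_of_ne_zero hD0)]
        rw [hqD] at hc
        have hu0 : u ≠ 0 := by rintro rfl; simp at hc; omega
        have : q₃ = u * (D * c) := by rw [hw, hc]; ring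
        exact ⟨c, by rw [this, Nat.mul_div_cancel_left _ (Nat.pos_of_ne_zero hu0)]⟩
    rw [Finset.sum_congr rfl step]
    have hfilter : ∀ u, (ArithmeticFunction.moebius u : ℤ) * (if u ∣ q₃ / D then 1 else 0)
        = if u ∣ q₃ / D then (ArithmeticFunction.moebius u : ℤ) else 0 := by
      intro u; split_ifs <;> simp
    rw [Finset.sum_congr rfl (fun u _ => hfilter u), ← Finset.sum_filter,
      Nat.divisors_filter_dvd_of_dvd hq₃.ne' (Nat.div_dvd_of_dvd hD), moebius_sum]
    have : q₃ / D = 1 ↔ D = q₃ := by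
      constructor
      · intro h; obtain ⟨c, hc⟩ := hD
        have hD0 : D ≠ 0 := by rintro rfl; simp at hc; omega
        rw [hc, Nat.mul_div_cancel_left _ (Nat.pos_of_ne_zero hD0)] at h
        rw [hc, h, mul_one]
      · rintro rfl; exact Nat.div_self hq₃
    simp only [this]
  · have : ∀ t ∈ q₃.divisors,
        (ArithmeticFunction.moebius (q₃ / t) : ℤ) * (if D ∣ t then 1 else 0) = 0 := by
      intro t ht
      obtain ⟨ht1, _⟩ := Nat.mem_divisors.mp ht
      have : ¬ D ∣ t := fun h => hD (h.trans ht1)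
      simp [this]
    rw [Finset.sum_congr rfl this]
    have : D ≠ q₃ := by rintro rfl; exact hD dvd_rfl
    simp [this]

lemma den_int_div_iff (n : ℤ) (Q' : ℕ) (h : 0 < Q') :
    ((n : ℚ) / (Q' : ℚ)).den = 1 ↔ (Q' : ℤ) ∣ n := by
  have hQ : (Q' : ℚ) ≠ 0 := by positivity
  constructor
  · intro hden
    obtain ⟨m, hm⟩ : ∃ m : ℤ, (n : ℚ) / Q' = m := ⟨_, ((Rat.den_eq_one_iff _).mp hden).symm⟩
    refine ⟨m, ?_⟩
    have h2 : (n : ℚ) = (Q' : ℚ) * m := by field_simp at hm; linear_combination hm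
    exact_mod_cast h2
  · rintro ⟨m, rfl⟩
    have : ((Q' * m : ℤ) : ℚ) / Q' = (m : ℚ) := by push_cast; field_simp
    rw [this, Rat.den_intCast]

lemma full_sum (Q' : ℕ) (hQ' : 0 < Q') (n : ℤ) :
    ∑ j ∈ Finset.Icc 1 Q', e ((n : ℝ) * j / Q') = if (Q' : ℤ) ∣ n then (Q' : ℂ) else 0 := by
  have hQR : (Q' : ℝ) ≠ 0 := by positivity
  set z := e ((n : ℝ) / Q') with hz
  have hterm : ∀ j : ℕ, e ((n : ℝ) * j / Q') = z ^ j := by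
    intro j
    rw [hz, e_pow]
    congr 1
    field_simp
  have hzQ : z ^ Q' = 1 := by
    rw [hz, e_pow]
    have : (Q' : ℝ) * ((n : ℝ) / Q') = (n : ℝ) := by field_simp
    rw [this, e_int]
  have hIcc : ∑ j ∈ Finset.Icc 1 Q', z ^ j = z * ∑ k ∈ Finset.range Q', z ^ k := by
    have h1 : Finset.Icc 1 Q' = Finset.Ico 1 (Q' + 1) := by
      ext j; simp [Nat.lt_succ_iff]
    rw [h1, Finset.sum_Ico_eq_sum_range, Finset.mul_sum]
    simp [pow_succ, pow_add, mul_comm]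
  rw [Finset.sum_congr rfl (fun j _ => hterm j), hIcc, geom_detect Q' z hzQ]
  have hiff : z = 1 ↔ (Q' : ℤ) ∣ n := by
    rw [hz]
    have : (n : ℝ) / Q' = (((n : ℚ) / (Q' : ℚ) : ℚ) : ℝ) := by push_cast; ring
    rw [this, e_rat_eq_one_iff, den_int_div_iff n Q' hQ']
  split_ifs with h1 h2 h2
  · rw [h1, one_mul]
  · exact absurd (hiff.mp h1) h2
  · exact absurd (hiff.mpr h2) h1
  · rw [mul_zero]

lemma coprime_divisors_filter (q a : ℕ) (hq : 0 < q) (ha : 0 < a) :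
    q.divisors.filter (· ∣ a) = (Nat.gcd a q).divisors := by
  ext d
  simp only [Finset.mem_filter, Nat.mem_divisors]
  constructor
  · rintro ⟨⟨hdq, _⟩, hda⟩
    exact ⟨Nat.dvd_gcd hda hdq, Nat.gcd_ne_zero_left ha.ne'⟩
  · rintro ⟨hd, _⟩
    exact ⟨⟨hd.trans (Nat.gcd_dvd_right a q), hq.ne'⟩, hd.trans (Nat.gcd_dvd_left a q)⟩

lemma coprime_indicator (q a : ℕ) (hq : 0 < q) (ha : 0 < a) :
    (if Nat.gcd a q = 1 then (1 : ℤ) else 0)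
      = ∑ d ∈ q.divisors, ArithmeticFunction.moebius d * (if d ∣ a then 1 else 0) := by
  have h1 : ∀ d, (ArithmeticFunction.moebius d : ℤ) * (if d ∣ a then 1 else 0)
      = if d ∣ a then (ArithmeticFunction.moebius d : ℤ) else 0 := by
    intro d; split_ifs <;> simp
  rw [Finset.sum_congr rfl (fun d _ => h1 d), ← Finset.sum_filter,
    coprime_divisors_filter q a hq ha, moebius_sum]

lemma ramanujan (q : ℕ) (hq : 0 < q) (n : ℤ) :
    ∑ a ∈ (Finset.Icc 1 q).filter (fun a => Nat.gcd a q = 1), e ((n : ℝ) * a / q)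
      = ∑ v ∈ q.divisors, (ArithmeticFunction.moebius (q / v) : ℂ)
          * (if (v : ℤ) ∣ n then (v : ℂ) else 0) := by
  have step1 : ∑ a ∈ (Finset.Icc 1 q).filter (fun a => Nat.gcd a q = 1), e ((n : ℝ) * a / q)
      = ∑ a ∈ Finset.Icc 1 q, ∑ d ∈ q.divisors,
          ((ArithmeticFunction.moebius d : ℂ) * (if d ∣ a then 1 else 0)) * e ((n : ℝ) * a / q) := by
    rw [Finset.sum_filter]
    refine Finset.sum_congr rfl (fun a ha => ?_)
    have ha1 : 0 < a := by
      have := (Finset.mem_Icc.mp ha).1; omega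
    have hind := coprime_indicator q a hq ha1
    have hindC : (if Nat.gcd a q = 1 then (1 : ℂ) else 0)
        = ∑ d ∈ q.divisors, (ArithmeticFunction.moebius d : ℂ) * (if d ∣ a then 1 else 0) := by
      exact_mod_cast congrArg (fun z : ℤ => (z : ℂ)) hind
    rw [← Finset.sum_mul, ← hindC]
    split_ifs <;> simp
  rw [step1, Finset.sum_comm]
  have step2 : ∀ d ∈ q.divisors,
      ∑ a ∈ Finset.Icc 1 q, ((ArithmeticFunction.moebius d : ℂ) * (if d ∣ a then 1 else 0))
          * e ((n : ℝ) * a / q)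
      = (ArithmeticFunction.moebius d : ℂ) * (if ((q / d : ℕ) : ℤ) ∣ n then ((q / d : ℕ) : ℂ) else 0) := by
    intro d hd
    obtain ⟨hdq, hq0⟩ := Nat.mem_divisors.mp hd
    have hd0 : 0 < d := Nat.pos_of_dvd_of_pos hdq hq
    have hqd0 : 0 < q / d := Nat.div_pos (Nat.le_of_dvd hq hdq) hd0
    simp only [mul_assoc]
    rw [← Finset.mul_sum]
    congr 1
    have h3 : ∑ a ∈ Finset.Icc 1 q, (if d ∣ a then (1:ℂ) else 0) * e ((n : ℝ) * a / q)
        = ∑ a ∈ (Finset.Icc 1 q).filter (d ∣ ·), e ((n : ℝ) * a / q) := by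
      rw [Finset.sum_filter]
      refine Finset.sum_congr rfl (fun a _ => ?_)
      split_ifs <;> simp
    rw [h3]
    have h4 : ∑ a ∈ (Finset.Icc 1 q).filter (d ∣ ·), e ((n : ℝ) * a / q)
        = ∑ j ∈ Finset.Icc 1 (q / d), e ((n : ℝ) * j / (q / d : ℕ)) := by
      refine Finset.sum_nbij' (fun a => a / d) (fun j => d * j) ?_ ?_ ?_ ?_ ?_
      · intro a ha
        simp only [Finset.mem_filter, Finset.mem_Icc] at ha
        obtain ⟨⟨ha1, ha2⟩, hda⟩ := ha
        simp only [Finset.mem_Icc]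
        constructor
        · exact Nat.one_le_div_iff hd0 |>.mpr (Nat.le_of_dvd (by omega) hda)
        · exact Nat.div_le_div_right ha2
      · intro j hj
        simp only [Finset.mem_Icc] at hj
        simp only [Finset.mem_filter, Finset.mem_Icc]
        refine ⟨⟨by nlinarith [hj.1, hd0], ?_⟩, Dvd.intro j rfl⟩
        calc d * j ≤ d * (q / d) := Nat.mul_le_mul_left d hj.2
        _ = q := Nat.mul_div_cancel' hdq
      · intro a ha
        simp only [Finset.mem_filter] at ha
        exact Nat.mul_div_cancel' ha.2
      · intro j hj
        exact Nat.mul_div_cancel_left j hd0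
      · intro a ha
        simp only [Finset.mem_filter, Finset.mem_Icc] at ha
        obtain ⟨⟨ha1, ha2⟩, c, hc⟩ := ha
        subst hc
        simp only [Nat.mul_div_cancel_left c hd0]
        congr 1
        have hq_eq : (q : ℝ) = (d : ℝ) * ((q / d : ℕ) : ℝ) := by
          exact_mod_cast (Nat.mul_div_cancel' hdq).symm
        have hd0' : (d : ℝ) ≠ 0 := by positivity
        have hqd0' : ((q / d : ℕ) : ℝ) ≠ 0 := by positivity
        rw [hq_eq]
        push_cast
        field_simp
    rw [h4, full_sum (q / d) hqd0 n]
  rw [Finset.sum_congr rfl step2]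
  have hstep3 : ∀ v ∈ q.divisors,
      (ArithmeticFunction.moebius (q / v) : ℂ) * (if (v : ℤ) ∣ n then (v : ℂ) else 0)
      = (fun d => (ArithmeticFunction.moebius d : ℂ)
          * (if ((q / d : ℕ) : ℤ) ∣ n then ((q / d : ℕ) : ℂ) else 0)) (q / v) := by
    intro v hv
    obtain ⟨hvq, hq0⟩ := Nat.mem_divisors.mp hv
    simp only []
    rw [Nat.div_div_self hvq hq0]
  rw [Finset.sum_congr rfl hstep3]
  exact (Nat.sum_div_divisors q (fun d => (ArithmeticFunction.moebius d : ℂ)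
      * (if ((q / d : ℕ) : ℤ) ∣ n then ((q / d : ℕ) : ℂ) else 0))).symm

lemma coprime_div_gcd_div (q eee t : ℕ) (hq : Squarefree q) (he : eee ∣ q) (ht : 0 < t) :
    Nat.Coprime (eee / Nat.gcd eee t) (t / Nat.gcd eee t) := by
  set g := Nat.gcd eee t with hg
  have he0 : eee ≠ 0 := fun h => hq.ne_zero (by subst h; simpa using he)
  have hg0 : 0 < g := Nat.gcd_pos_of_pos_right eee ht
  by_contra hcop
  obtain ⟨p, hp, hpd⟩ := Nat.exists_prime_and_dvd hcop
  have hpf : p ∣ eee / g := hpd.trans (Nat.gcd_dvd_left _ _)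
  have hpt' : p ∣ t / g := hpd.trans (Nat.gcd_dvd_right _ _)
  -- p ∣ eee/g and p ∣ t/g ⇒ p*g ∣ eee? no: p ∣ eee/g gives p*g ∣ eee
  have hge : g ∣ eee := Nat.gcd_dvd_left _ _
  have hgt : g ∣ t := Nat.gcd_dvd_right _ _
  have h1 : p * g ∣ eee := by
    obtain ⟨c, hc⟩ := hpf
    exact ⟨c, by rw [← Nat.div_mul_cancel hge, hc]; ring⟩
  have h2 : p * g ∣ t := by
    obtain ⟨c, hc⟩ := hpt'
    exact ⟨c, by rw [← Nat.div_mul_cancel hgt, hc]; ring⟩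
  have hpg : p * g ∣ g := by
    rw [hg]
    exact Nat.dvd_gcd h1 h2
  have : p ∣ 1 := by
    have := Nat.le_of_dvd hg0 hpg
    nlinarith [hp.two_le, hg0]
  exact Nat.Prime.one_lt hp |>.ne' (Nat.eq_one_of_dvd_one this)

lemma count_lemma (Q t q₁ q₂ e₁ e₂ : ℕ) (ht : 0 < t)
    (hq₁ : Squarefree q₁) (hq₂ : Squarefree q₂)
    (he₁ : e₁ ∣ q₁) (he₂ : e₂ ∣ q₂) (hQdvd : q₁ * q₂ ∣ Q) (hQ : 0 < Q)
    (m₁ m₂ : ℤ) (hm₁ : m₁ ≠ 0) (hm₂ : m₂ ≠ 0) (hne : m₁ ≠ m₂) :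
    ∑ k ∈ Finset.range Q,
        (if (e₁ : ℤ) ∣ (m₁ + k * t) ∧ (e₂ : ℤ) ∣ (m₂ + k * t) then ((e₁ : ℝ) * e₂) else 0)
      ≤ (Q : ℝ) * ((m₁ * m₂ * (m₁ - m₂)).natAbs : ℝ) := by
  classical
  set P : ℕ → Prop := fun k => (e₁ : ℤ) ∣ (m₁ + k * t) ∧ (e₂ : ℤ) ∣ (m₂ + k * t) with hP
  have hsum : ∑ k ∈ Finset.range Q,
      (if (e₁ : ℤ) ∣ (m₁ + k * t) ∧ (e₂ : ℤ) ∣ (m₂ + k * t) then ((e₁ : ℝ) * e₂) else 0)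
      = ((Finset.range Q).filter P).card * ((e₁ : ℝ) * e₂) := by
    rw [← Finset.sum_filter, Finset.sum_const, nsmul_eq_mul]
  rw [hsum]
  rcases Finset.eq_empty_or_nonempty ((Finset.range Q).filter P) with hemp | ⟨k₀, hk₀⟩
  · rw [hemp]; simp; positivity
  obtain ⟨hk₀Q, hk₀P⟩ := Finset.mem_filter.mp hk₀
  have hq₁0 : q₁ ≠ 0 := hq₁.ne_zero
  have hq₂0 : q₂ ≠ 0 := hq₂.ne_zero
  have he₁0 : 0 < e₁ := Nat.pos_of_ne_zero (fun h => hq₁0 (by subst h; simpa using he₁))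
  have he₂0 : 0 < e₂ := Nat.pos_of_ne_zero (fun h => hq₂0 (by subst h; simpa using he₂))
  set g₁ := Nat.gcd e₁ t with hg₁
  set g₂ := Nat.gcd e₂ t with hg₂
  set f₁ := e₁ / g₁ with hf₁
  set f₂ := e₂ / g₂ with hf₂
  have hg₁0 : 0 < g₁ := Nat.gcd_pos_of_pos_right e₁ ht
  have hg₂0 : 0 < g₂ := Nat.gcd_pos_of_pos_right e₂ ht
  have hg₁e : g₁ ∣ e₁ := Nat.gcd_dvd_left _ _
  have hg₂e : g₂ ∣ e₂ := Nat.gcd_dvd_left _ _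
  have hg₁t : g₁ ∣ t := Nat.gcd_dvd_right _ _
  have hg₂t : g₂ ∣ t := Nat.gcd_dvd_right _ _
  have he₁eq : e₁ = g₁ * f₁ := (Nat.mul_div_cancel' hg₁e).symm
  have he₂eq : e₂ = g₂ * f₂ := (Nat.mul_div_cancel' hg₂e).symm
  have hf₁0 : 0 < f₁ := Nat.div_pos (Nat.le_of_dvd he₁0 hg₁e) hg₁0
  have hf₂0 : 0 < f₂ := Nat.div_pos (Nat.le_of_dvd he₂0 hg₂e) hg₂0
  set h := Nat.gcd f₁ f₂ with hh
  set L := Nat.lcm f₁ f₂ with hL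
  have hL0 : 0 < L := Nat.lcm_pos hf₁0 hf₂0
  have hf₁e : f₁ ∣ e₁ := ⟨g₁, by rw [he₁eq]; ring⟩
  have hf₂e : f₂ ∣ e₂ := ⟨g₂, by rw [he₂eq]; ring⟩
  have hLQ : L ∣ Q := (Nat.lcm_dvd ((hf₁e.trans he₁).trans (Dvd.intro q₂ rfl))
      ((hf₂e.trans he₂).trans (Dvd.intro_left q₁ rfl))).trans hQdvd
  -- divisibility facts at the witness k₀
  have hd₁ : (e₁ : ℤ) ∣ m₁ + k₀ * t := hk₀P.1
  have hd₂ : (e₂ : ℤ) ∣ m₂ + k₀ * t := hk₀P.2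
  have hg₁m : (g₁ : ℤ) ∣ m₁ := by
    have h1 : (g₁ : ℤ) ∣ m₁ + k₀ * t := (Int.natCast_dvd_natCast.mpr hg₁e).trans hd₁
    have h2 : (g₁ : ℤ) ∣ (k₀ : ℤ) * t := Dvd.dvd.mul_left (Int.natCast_dvd_natCast.mpr hg₁t) _
    simpa using h1.sub h2
  have hg₂m : (g₂ : ℤ) ∣ m₂ := by
    have h1 : (g₂ : ℤ) ∣ m₂ + k₀ * t := (Int.natCast_dvd_natCast.mpr hg₂e).trans hd₂
    have h2 : (g₂ : ℤ) ∣ (k₀ : ℤ) * t := Dvd.dvd.mul_left (Int.natCast_dvd_natCast.mpr hg₂t) _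
    simpa using h1.sub h2
  have hhm : (h : ℤ) ∣ m₁ - m₂ := by
    have h1 : (h : ℤ) ∣ m₁ + k₀ * t :=
      (Int.natCast_dvd_natCast.mpr ((Nat.gcd_dvd_left f₁ f₂).trans hf₁e)).trans hd₁
    have h2 : (h : ℤ) ∣ m₂ + k₀ * t :=
      (Int.natCast_dvd_natCast.mpr ((Nat.gcd_dvd_right f₁ f₂).trans hf₂e)).trans hd₂
    simpa using h1.sub h2
  -- size bounds
  have hg₁le : g₁ ≤ m₁.natAbs := Nat.le_of_dvd (Int.natAbs_pos.mpr hm₁)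
    (by rw [← Int.natAbs_natCast g₁]; exact Int.natAbs_dvd_natAbs.mpr hg₁m)
  have hg₂le : g₂ ≤ m₂.natAbs := Nat.le_of_dvd (Int.natAbs_pos.mpr hm₂)
    (by rw [← Int.natAbs_natCast g₂]; exact Int.natAbs_dvd_natAbs.mpr hg₂m)
  have hhle : h ≤ (m₁ - m₂).natAbs := Nat.le_of_dvd (Int.natAbs_pos.mpr (sub_ne_zero.mpr hne))
    (by rw [← Int.natAbs_natCast h]; exact Int.natAbs_dvd_natAbs.mpr hhm)
  -- every k in the filter is ≡ k₀ mod L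
  have hmod : ∀ k ∈ (Finset.range Q).filter P, k % L = k₀ % L := by
    intro k hk
    obtain ⟨hkQ, hkP⟩ := Finset.mem_filter.mp hk
    have key : ∀ (eee ggg fff : ℕ) (m : ℤ), eee = ggg * fff → ggg ∣ t → 0 < ggg →
        Nat.Coprime fff (t / ggg) →
        (eee : ℤ) ∣ m + k * t → (eee : ℤ) ∣ m + k₀ * t → (fff : ℤ) ∣ (k : ℤ) - k₀ := by
      intro eee ggg fff m heq hgt' hg0' hcop hk1 hk2
      have hdiff : (eee : ℤ) ∣ ((k : ℤ) - k₀) * t := by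
        have := hk1.sub hk2
        simpa [sub_mul] using (by ring_nf; ring_nf at this; exact this : (eee:ℤ) ∣ (k * t - k₀ * t))
      have hteq : (t : ℤ) = (ggg : ℤ) * ((t / ggg : ℕ) : ℤ) := by
        exact_mod_cast (Nat.mul_div_cancel' hgt').symm
      rw [heq] at hdiff
      push_cast at hdiff
      rw [hteq] at hdiff
      have hdiff2 : (fff : ℤ) ∣ ((k : ℤ) - k₀) * ((t / ggg : ℕ) : ℤ) := by
        have hgne : (ggg : ℤ) ≠ 0 := by exact_mod_cast hg0'.ne'
        have : (ggg : ℤ) * (fff : ℤ) ∣ (ggg : ℤ) * (((k : ℤ) - k₀) * ((t / ggg : ℕ) : ℤ)) := by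
          have h' := hdiff
          have : ((k:ℤ) - k₀) * ((ggg:ℤ) * ((t / ggg : ℕ):ℤ)) = (ggg:ℤ) * (((k:ℤ) - k₀) * ((t / ggg : ℕ):ℤ)) := by ring
          rwa [this] at h'
        exact (mul_dvd_mul_iff_left hgne).mp this
      have hcopZ : IsCoprime (fff : ℤ) ((t / ggg : ℕ) : ℤ) := Nat.isCoprime_iff_coprime.mpr hcop
      exact hcopZ.dvd_of_dvd_mul_right hdiff2
    have hc₁ : Nat.Coprime f₁ (t / g₁) := coprime_div_gcd_div q₁ e₁ t hq₁ he₁ ht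
    have hc₂ : Nat.Coprime f₂ (t / g₂) := coprime_div_gcd_div q₂ e₂ t hq₂ he₂ ht
    have hdv₁ := key e₁ g₁ f₁ m₁ he₁eq hg₁t hg₁0 hc₁ hkP.1 hd₁
    have hdv₂ := key e₂ g₂ f₂ m₂ he₂eq hg₂t hg₂0 hc₂ hkP.2 hd₂
    have hdvL : (L : ℤ) ∣ (k : ℤ) - k₀ := by
      exact Int.ofNat_dvd_left.mpr (Nat.lcm_dvd (Int.ofNat_dvd_left.mp hdv₁) (Int.ofNat_dvd_left.mp hdv₂))
    have hme : (k : ℤ) % L = (k₀ : ℤ) % L := by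
      have h1 : (k₀ : ℤ) ≡ (k : ℤ) [ZMOD (L : ℤ)] := Int.modEq_iff_dvd.mpr hdvL
      exact h1.symm
    have : ((k % L : ℕ) : ℤ) = ((k₀ % L : ℕ) : ℤ) := by
      rw [Int.natCast_mod, Int.natCast_mod, hme]
    exact_mod_cast this
  -- injectivity into range (Q / L)
  have hcard : ((Finset.range Q).filter P).card ≤ Q / L := by
    have := Finset.card_le_card_of_injOn (s := (Finset.range Q).filter P)
      (t := Finset.range (Q / L)) (fun k => k / L)
      (by
        intro k hk
        rw [Finset.mem_coe, Finset.mem_range]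
        exact Nat.div_lt_div_of_lt_of_dvd hLQ (Finset.mem_range.mp (Finset.mem_filter.mp (Finset.mem_coe.mp hk)).1))
      (by
        intro k₁ hk₁ k₂ hk₂ heq
        have hk₁' := Finset.mem_coe.mp hk₁
        have hk₂' := Finset.mem_coe.mp hk₂
        have h1 := hmod k₁ hk₁'
        have h2 := hmod k₂ hk₂'
        have e1 := Nat.div_add_mod k₁ L
        have e2 := Nat.div_add_mod k₂ L
        have heq' : k₁ / L = k₂ / L := heq
        rw [← e1, ← e2, heq', h1, h2])
    simpa using this
  -- final arithmetic
  have harith : (Q / L) * (e₁ * e₂) = Q * (g₁ * g₂ * h) := by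
    have hfL : f₁ * f₂ = h * L := (Nat.gcd_mul_lcm f₁ f₂).symm
    calc (Q / L) * (e₁ * e₂) = (Q / L) * (g₁ * g₂ * (f₁ * f₂)) := by rw [he₁eq, he₂eq]; ring_nf
    _ = (Q / L) * L * (g₁ * g₂ * h) := by rw [hfL]; ring
    _ = Q * (g₁ * g₂ * h) := by rw [Nat.div_mul_cancel hLQ]
  have hnat : ((Finset.range Q).filter P).card * (e₁ * e₂) ≤ Q * (m₁ * m₂ * (m₁ - m₂)).natAbs := by
    calc ((Finset.range Q).filter P).card * (e₁ * e₂) ≤ (Q / L) * (e₁ * e₂) :=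
      Nat.mul_le_mul_right _ hcard
    _ = Q * (g₁ * g₂ * h) := harith
    _ ≤ Q * (m₁.natAbs * m₂.natAbs * (m₁ - m₂).natAbs) := by
        exact Nat.mul_le_mul_left Q (Nat.mul_le_mul (Nat.mul_le_mul hg₁le hg₂le) hhle)
    _ = Q * (m₁ * m₂ * (m₁ - m₂)).natAbs := by rw [Int.natAbs_mul, Int.natAbs_mul]
  have := (Nat.cast_le (α := ℝ)).mpr hnat
  push_cast at this ⊢
  linarith

lemma key_detect (Q : ℕ) (hQ : 0 < Q) (q₃ : ℕ) (hq₃ : 0 < q₃) (x : ℚ) (hx : x.den ∣ Q) (θ : ℝ) :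
    (if x.den = q₃ then e θ else 0)
      = (Q : ℂ)⁻¹ * ∑ t ∈ q₃.divisors, (ArithmeticFunction.moebius (q₃ / t) : ℂ)
          * ∑ k ∈ Finset.range Q, e (θ + k * (t * (x : ℝ))) := by
  have step1 : ∀ t : ℕ, ∑ k ∈ Finset.range Q, e (θ + k * (t * (x : ℝ)))
      = e θ * (if x.den ∣ t then (Q : ℂ) else 0) := by
    intro t
    rw [← detect Q x hx t, Finset.mul_sum]
    exact Finset.sum_congr rfl (fun k _ => e_add θ _)
  simp only [step1]
  have step2 : ∑ t ∈ q₃.divisors, (ArithmeticFunction.moebius (q₃ / t) : ℂ)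
      * (e θ * (if x.den ∣ t then (Q : ℂ) else 0))
      = e θ * (Q : ℂ) * ∑ t ∈ q₃.divisors, (ArithmeticFunction.moebius (q₃ / t) : ℂ)
          * (if x.den ∣ t then (1 : ℂ) else 0) := by
    rw [Finset.mul_sum]
    refine Finset.sum_congr rfl (fun t _ => ?_)
    split_ifs <;> ring
  rw [step2]
  have step3 : ∑ t ∈ q₃.divisors, (ArithmeticFunction.moebius (q₃ / t) : ℂ)
      * (if x.den ∣ t then (1 : ℂ) else 0) = if x.den = q₃ then 1 else 0 := by
    have := moebius_detect q₃ hq₃ x.den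
    have hc := congrArg (fun z : ℤ => (z : ℂ)) this
    push_cast at hc
    convert hc using 2 <;> split_ifs <;> simp
  rw [step3]
  have hQ0 : (Q : ℂ) ≠ 0 := by exact_mod_cast hQ.ne'
  split_ifs <;> field_simp <;> ring

set_option maxHeartbeats 2000000 in
set_option maxHeartbeats 2000000 in
/-- Corollary 9.3: for distinct nonzero integers `m₁, m₂`, `b` coprime to `r`, squarefree
`q₁, q₂` and any positive `q₃`, the exponential sum over pairs `(a₁, a₂)` of reduced
residues with `denom(a₁/q₁ + a₂/q₂ - b/r) = q₃` is at most
`|m₁ m₂ (m₁ - m₂)| · τ(r·lcm(q₁,q₂))³`. The denominator of a rational `x` (mod 1) is the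
least positive integer `D` with `D·x ∈ ℤ`, i.e. `Rat.den`. -/
theorem cor11 (m₁ m₂ : ℤ) (hm₁ : m₁ ≠ 0) (hm₂ : m₂ ≠ 0) (hne : m₁ ≠ m₂)
    (r : ℕ) (hr : 0 < r) (b : ℤ) (hb : Int.gcd b (r : ℤ) = 1)
    (q₁ q₂ : ℕ) (hq₁ : Squarefree q₁) (hq₂ : Squarefree q₂)
    (q₃ : ℕ) (hq₃ : 0 < q₃) :
      ‖∑ a ∈ (Finset.Icc 1 q₁ ×ˢ Finset.Icc 1 q₂).filter
          (fun a => Nat.gcd a.1 q₁ = 1 ∧ Nat.gcd a.2 q₂ = 1 ∧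
            ((a.1 : ℚ) / (q₁ : ℚ) + (a.2 : ℚ) / (q₂ : ℚ) - (b : ℚ) / (r : ℚ)).den = q₃),
        e ((m₁ : ℝ) * (a.1 : ℝ) / q₁ + (m₂ : ℝ) * (a.2 : ℝ) / q₂)‖ ≤
      ((m₁ * m₂ * (m₁ - m₂)).natAbs : ℝ) *
        ((r * Nat.lcm q₁ q₂).divisors.card : ℝ) ^ 3 := by
  classical
  have hq₁0 : 0 < q₁ := Nat.pos_of_ne_zero hq₁.ne_zero
  have hq₂0 : 0 < q₂ := Nat.pos_of_ne_zero hq₂.ne_zero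
  set L := Nat.lcm q₁ q₂ with hL
  have hL0 : 0 < L := Nat.pos_of_ne_zero (Nat.lcm_ne_zero hq₁0.ne' hq₂0.ne')
  have hrL0 : 0 < r * L := Nat.mul_pos hr hL0
  set Q := r * (q₁ * q₂) with hQdef
  have hQ0 : 0 < Q := by positivity
  set M : ℝ := ((m₁ * m₂ * (m₁ - m₂)).natAbs : ℝ) with hM
  have hM0 : 0 ≤ M := by positivity
  set x : ℕ × ℕ → ℚ := fun a =>
    (a.1 : ℚ) / (q₁ : ℚ) + (a.2 : ℚ) / (q₂ : ℚ) - (b : ℚ) / (r : ℚ) with hx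
  set θ : ℕ × ℕ → ℝ := fun a => (m₁ : ℝ) * (a.1 : ℝ) / q₁ + (m₂ : ℝ) * (a.2 : ℝ) / q₂ with hθ
  -- denominator of x a divides r * L (hence Q)
  have hdenrL : ∀ a : ℕ × ℕ, (x a).den ∣ r * L := by
    intro a
    obtain ⟨c₁, hcc₁⟩ := Nat.dvd_lcm_left q₁ q₂
    obtain ⟨c₂, hcc₂⟩ := Nat.dvd_lcm_right q₁ q₂
    have hxa : x a = Rat.divInt
        ((r : ℤ) * ((a.1 : ℤ) * (c₁ : ℤ) + (a.2 : ℤ) * (c₂ : ℤ)) - b * L)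
        ((r * L : ℕ) : ℤ) := by
      rw [Rat.divInt_eq_div, hx]
      have hq₁Q : (q₁ : ℚ) ≠ 0 := by positivity
      have hq₂Q : (q₂ : ℚ) ≠ 0 := by positivity
      have hrQ : (r : ℚ) ≠ 0 := by positivity
      have hLQ : (L : ℚ) ≠ 0 := by positivity
      have hc1 : (q₁ : ℚ) * (c₁ : ℚ) = (L : ℚ) := by exact_mod_cast congrArg (Nat.cast : ℕ → ℚ) hcc₁.symm
      have hc2 : (q₂ : ℚ) * (c₂ : ℚ) = (L : ℚ) := by exact_mod_cast congrArg (Nat.cast : ℕ → ℚ) hcc₂.symm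
      push_cast
      field_simp
      linear_combination (-(a.1 : ℚ) * (q₂ : ℚ) * (r : ℚ)) * hc1
        - ((a.2 : ℚ) * (q₁ : ℚ) * (r : ℚ)) * hc2
    rw [hxa]
    have := Rat.den_dvd ((r : ℤ) * ((a.1 : ℤ) * (c₁ : ℤ) + (a.2 : ℤ) * (c₂ : ℤ)) - b * L) ((r * L : ℕ) : ℤ)
    exact_mod_cast this
  have hLdvd : L ∣ q₁ * q₂ := Nat.lcm_dvd (Dvd.intro q₂ rfl) (Dvd.intro_left q₁ rfl)
  have hrLQ : r * L ∣ Q := mul_dvd_mul_left r hLdvd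
  have hdenQ : ∀ a : ℕ × ℕ, (x a).den ∣ Q := fun a => (hdenrL a).trans hrLQ
  set A₀ := (Finset.Icc 1 q₁ ×ˢ Finset.Icc 1 q₂).filter
      (fun a => Nat.gcd a.1 q₁ = 1 ∧ Nat.gcd a.2 q₂ = 1) with hA₀
  have hfe : (Finset.Icc 1 q₁ ×ˢ Finset.Icc 1 q₂).filter
      (fun a => Nat.gcd a.1 q₁ = 1 ∧ Nat.gcd a.2 q₂ = 1 ∧
        ((a.1 : ℚ) / (q₁ : ℚ) + (a.2 : ℚ) / (q₂ : ℚ) - (b : ℚ) / (r : ℚ)).den = q₃)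
      = A₀.filter (fun a => (x a).den = q₃) := by
    rw [hA₀, Finset.filter_filter]
    apply Finset.filter_congr
    intro a _
    rw [hx]
    tauto
  rw [hfe]
  by_cases hcase : q₃ ∣ r * L
  swap
  · have hempty : A₀.filter (fun a => (x a).den = q₃) = ∅ := by
      rw [Finset.eq_empty_iff_forall_notMem]
      intro a ha
      obtain ⟨-, hd⟩ := Finset.mem_filter.mp ha
      exact hcase (hd ▸ hdenrL a)
    rw [hempty]
    simp only [Finset.sum_empty, norm_zero]
    positivity
  -- main case
  set G₁ : ℤ → ℂ := fun n =>
    ∑ a₁ ∈ (Finset.Icc 1 q₁).filter (fun a => Nat.gcd a q₁ = 1), e ((n : ℝ) * a₁ / q₁) with hG₁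
  set G₂ : ℤ → ℂ := fun n =>
    ∑ a₂ ∈ (Finset.Icc 1 q₂).filter (fun a => Nat.gcd a q₂ = 1), e ((n : ℝ) * a₂ / q₂) with hG₂
  set F : ℕ → ℕ → ℂ := fun t k => ∑ a ∈ A₀, e (θ a + k * (t * ((x a : ℚ) : ℝ))) with hF
  -- Step C : rewrite the sum
  have hS : ∑ a ∈ A₀.filter (fun a => (x a).den = q₃),
        e ((m₁ : ℝ) * (a.1 : ℝ) / q₁ + (m₂ : ℝ) * (a.2 : ℝ) / q₂)
      = (Q : ℂ)⁻¹ * ∑ t ∈ q₃.divisors, (ArithmeticFunction.moebius (q₃ / t) : ℂ)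
          * ∑ k ∈ Finset.range Q, F t k := by
    rw [Finset.sum_filter]
    have h1 : ∀ a ∈ A₀, (if (x a).den = q₃
          then e ((m₁ : ℝ) * (a.1 : ℝ) / q₁ + (m₂ : ℝ) * (a.2 : ℝ) / q₂) else 0)
        = (Q : ℂ)⁻¹ * ∑ t ∈ q₃.divisors, (ArithmeticFunction.moebius (q₃ / t) : ℂ)
            * ∑ k ∈ Finset.range Q, e (θ a + k * (t * ((x a : ℚ) : ℝ))) := by
      intro a _
      exact key_detect Q hQ0 q₃ hq₃ (x a) (hdenQ a) (θ a)
    rw [Finset.sum_congr rfl h1, ← Finset.mul_sum]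
    congr 1
    rw [Finset.sum_comm]
    refine Finset.sum_congr rfl (fun t _ => ?_)
    rw [← Finset.mul_sum]
    congr 1
    rw [Finset.sum_comm]
  rw [hS]
  -- Step D : factor F
  have hD : ∀ t, ∀ k, F t k
      = e (-(((k * t : ℕ) : ℝ) * (b : ℝ) / r)) * (G₁ (m₁ + k * t) * G₂ (m₂ + k * t)) := by
    intro t k
    rw [hF]
    simp only []
    have hA₀prod : A₀ = ((Finset.Icc 1 q₁).filter (fun a => Nat.gcd a q₁ = 1))
        ×ˢ ((Finset.Icc 1 q₂).filter (fun a => Nat.gcd a q₂ = 1)) := by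
      rw [hA₀]
      exact Finset.filter_product (fun a => Nat.gcd a q₁ = 1) (fun a => Nat.gcd a q₂ = 1)
    rw [hA₀prod, Finset.sum_product]
    have hterm : ∀ a₁ a₂ : ℕ, e (θ (a₁, a₂) + k * (t * ((x (a₁, a₂) : ℚ) : ℝ)))
        = e (((m₁ + k * t : ℤ) : ℝ) * (a₁ : ℝ) / q₁)
          * (e (((m₂ + k * t : ℤ) : ℝ) * (a₂ : ℝ) / q₂)
            * e (-(((k * t : ℕ) : ℝ) * (b : ℝ) / r))) := by
      intro a₁ a₂
      rw [← e_add, ← e_add]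
      congr 1
      rw [hθ, hx]
      have hq₁R : (q₁ : ℝ) ≠ 0 := by positivity
      have hq₂R : (q₂ : ℝ) ≠ 0 := by positivity
      have hrR : (r : ℝ) ≠ 0 := by positivity
      push_cast
      field_simp
      ring
    simp only [hterm]
    rw [hG₁, hG₂]
    simp only []
    rw [Finset.sum_mul_sum, Finset.mul_sum]
    refine Finset.sum_congr rfl fun a₁ _ => ?_
    rw [Finset.mul_sum]
    exact Finset.sum_congr rfl fun a₂ _ => by ring
  -- Step E : bounds
  set B₁ : ℕ → ℕ → ℝ := fun t k =>
    ∑ v ∈ q₁.divisors, (if (v : ℤ) ∣ m₁ + k * t then (v : ℝ) else 0) with hB₁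
  set B₂ : ℕ → ℕ → ℝ := fun t k =>
    ∑ v ∈ q₂.divisors, (if (v : ℤ) ∣ m₂ + k * t then (v : ℝ) else 0) with hB₂
  have hBnonneg : ∀ (q : ℕ) (m : ℤ) (t k : ℕ),
      (0:ℝ) ≤ ∑ v ∈ q.divisors, (if (v : ℤ) ∣ m + k * t then (v : ℝ) else 0) := by
    intro q m t k
    refine Finset.sum_nonneg fun v _ => ?_
    split_ifs <;> positivity
  have hCbound : ∀ (q : ℕ) (hq0 : 0 < q) (n : ℤ),
      ‖∑ a ∈ (Finset.Icc 1 q).filter (fun a => Nat.gcd a q = 1),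
        e ((n : ℝ) * a / q)‖
      ≤ ∑ v ∈ q.divisors, (if (v : ℤ) ∣ n then (v : ℝ) else 0) := by
    intro q hq0 n
    rw [ramanujan q hq0 n]
    refine le_trans (norm_sum_le _ _) (Finset.sum_le_sum fun v hv => ?_)
    rw [norm_mul]
    have hmu : ‖((ArithmeticFunction.moebius (q / v) : ℤ) : ℂ)‖ ≤ 1 := by
      rw [Complex.norm_intCast]
      exact_mod_cast ArithmeticFunction.abs_moebius_le_one
    split_ifs with hdvd
    · calc ‖((ArithmeticFunction.moebius (q / v) : ℤ) : ℂ)‖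
            * ‖((v : ℕ) : ℂ)‖
          ≤ 1 * ‖((v : ℕ) : ℂ)‖ := by
            exact mul_le_mul_of_nonneg_right hmu (norm_nonneg _)
      _ = (v : ℝ) := by rw [one_mul, Complex.norm_natCast]
    · simp
  have hFabs : ∀ t k, ‖F t k‖ ≤ B₁ t k * B₂ t k := by
    intro t k
    rw [hD t k, norm_mul, norm_mul, abs_e, one_mul]
    exact mul_le_mul (hCbound q₁ hq₁0 _) (hCbound q₂ hq₂0 _)
      (norm_nonneg _) (hBnonneg q₁ m₁ t k)
  -- counting bound for each t in divisors of q₃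
  have hBB : ∀ t ∈ q₃.divisors, ∑ k ∈ Finset.range Q, B₁ t k * B₂ t k
      ≤ (q₁.divisors.card : ℝ) * (q₂.divisors.card : ℝ) * ((Q : ℝ) * M) := by
    intro t ht
    have ht0 : 0 < t := Nat.pos_of_mem_divisors ht
    have hexp : ∀ k, B₁ t k * B₂ t k = ∑ v₁ ∈ q₁.divisors, ∑ v₂ ∈ q₂.divisors,
        (if (v₁ : ℤ) ∣ m₁ + k * t ∧ (v₂ : ℤ) ∣ m₂ + k * t then ((v₁ : ℝ) * v₂) else 0) := by
      intro k
      rw [hB₁, hB₂]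
      simp only []
      rw [Finset.sum_mul_sum]
      exact Finset.sum_congr rfl fun v₁ _ => Finset.sum_congr rfl fun v₂ _ =>
        ite_zero_mul_ite_zero _ _ _ _
    calc ∑ k ∈ Finset.range Q, B₁ t k * B₂ t k
        = ∑ v₁ ∈ q₁.divisors, ∑ v₂ ∈ q₂.divisors, ∑ k ∈ Finset.range Q,
            (if (v₁ : ℤ) ∣ m₁ + k * t ∧ (v₂ : ℤ) ∣ m₂ + k * t then ((v₁ : ℝ) * v₂) else 0) := by
          rw [Finset.sum_congr rfl fun k _ => hexp k, Finset.sum_comm]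
          exact Finset.sum_congr rfl fun v₁ _ => Finset.sum_comm
    _ ≤ ∑ v₁ ∈ q₁.divisors, ∑ v₂ ∈ q₂.divisors, (Q : ℝ) * M := by
          refine Finset.sum_le_sum fun v₁ hv₁ => Finset.sum_le_sum fun v₂ hv₂ => ?_
          exact count_lemma Q t q₁ q₂ v₁ v₂ ht0 hq₁ hq₂
            (Nat.dvd_of_mem_divisors hv₁) (Nat.dvd_of_mem_divisors hv₂)
            (Dvd.intro_left r rfl) hQ0 m₁ m₂ hm₁ hm₂ hne
    _ = (q₁.divisors.card : ℝ) * (q₂.divisors.card : ℝ) * ((Q : ℝ) * M) := by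
          rw [Finset.sum_const, Finset.sum_const, nsmul_eq_mul, nsmul_eq_mul]
          ring
  -- assemble
  have habs : ‖(Q : ℂ)⁻¹ * ∑ t ∈ q₃.divisors,
        (ArithmeticFunction.moebius (q₃ / t) : ℂ) * ∑ k ∈ Finset.range Q, F t k‖
      ≤ (Q : ℝ)⁻¹ * ∑ t ∈ q₃.divisors, ∑ k ∈ Finset.range Q, B₁ t k * B₂ t k := by
    rw [norm_mul, norm_inv, Complex.norm_natCast]
    refine mul_le_mul_of_nonneg_left ?_ (by positivity)
    refine le_trans (norm_sum_le _ _) (Finset.sum_le_sum fun t ht => ?_)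
    rw [norm_mul]
    have hmu : ‖((ArithmeticFunction.moebius (q₃ / t) : ℤ) : ℂ)‖ ≤ 1 := by
      rw [Complex.norm_intCast]
      exact_mod_cast ArithmeticFunction.abs_moebius_le_one
    calc ‖((ArithmeticFunction.moebius (q₃ / t) : ℤ) : ℂ)‖
          * ‖∑ k ∈ Finset.range Q, F t k‖
        ≤ 1 * ∑ k ∈ Finset.range Q, B₁ t k * B₂ t k := by
          refine mul_le_mul hmu ?_ (norm_nonneg _) zero_le_one
          exact le_trans (norm_sum_le _ _)
            (Finset.sum_le_sum fun k _ => hFabs t k)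
    _ = ∑ k ∈ Finset.range Q, B₁ t k * B₂ t k := one_mul _
  refine le_trans habs ?_
  have hstep : (Q : ℝ)⁻¹ * ∑ t ∈ q₃.divisors, ∑ k ∈ Finset.range Q, B₁ t k * B₂ t k
      ≤ (Q : ℝ)⁻¹ * ((q₃.divisors.card : ℝ)
        * ((q₁.divisors.card : ℝ) * (q₂.divisors.card : ℝ) * ((Q : ℝ) * M))) := by
    refine mul_le_mul_of_nonneg_left ?_ (by positivity)
    calc ∑ t ∈ q₃.divisors, ∑ k ∈ Finset.range Q, B₁ t k * B₂ t k
        ≤ ∑ t ∈ q₃.divisors, (q₁.divisors.card : ℝ) * (q₂.divisors.card : ℝ) * ((Q : ℝ) * M) :=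
          Finset.sum_le_sum hBB
    _ = (q₃.divisors.card : ℝ) * ((q₁.divisors.card : ℝ) * (q₂.divisors.card : ℝ) * ((Q : ℝ) * M)) := by
          rw [Finset.sum_const, nsmul_eq_mul]
  refine le_trans hstep ?_
  have hQR0 : (0:ℝ) < (Q : ℝ) := by exact_mod_cast hQ0
  have heq : (Q : ℝ)⁻¹ * ((q₃.divisors.card : ℝ)
        * ((q₁.divisors.card : ℝ) * (q₂.divisors.card : ℝ) * ((Q : ℝ) * M)))
      = (q₃.divisors.card : ℝ) * (q₁.divisors.card : ℝ) * (q₂.divisors.card : ℝ) * M := by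
    field_simp
  rw [heq]
  -- divisor-count comparisons
  have htau : ∀ n : ℕ, n ∣ r * L → (n.divisors.card : ℝ) ≤ ((r * L).divisors.card : ℝ) := by
    intro n hn
    exact_mod_cast Finset.card_le_card (Nat.divisors_subset_of_dvd hrL0.ne' hn)
  have hq₁rL : q₁ ∣ r * L := (Nat.dvd_lcm_left q₁ q₂).trans (dvd_mul_left L r)
  have hq₂rL : q₂ ∣ r * L := (Nat.dvd_lcm_right q₁ q₂).trans (dvd_mul_left L r)
  have hcard0 : ∀ n : ℕ, (0:ℝ) ≤ (n.divisors.card : ℝ) := fun n => by positivity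
  calc (q₃.divisors.card : ℝ) * (q₁.divisors.card : ℝ) * (q₂.divisors.card : ℝ) * M
      ≤ ((r * L).divisors.card : ℝ) * ((r * L).divisors.card : ℝ)
        * ((r * L).divisors.card : ℝ) * M := by
        refine mul_le_mul_of_nonneg_right ?_ hM0
        refine mul_le_mul (mul_le_mul (htau q₃ hcase) (htau q₁ hq₁rL)
          (hcard0 q₁) (hcard0 (r*L))) (htau q₂ hq₂rL) (hcard0 q₂) ?_
        positivity
  _ = M * ((r * L).divisors.card : ℝ) ^ 3 := by ring
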